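/- Let p ≥ 2 be an integer. A tricomplex number c = (c₁, c₂) ∈ 𝕄(3) belongs to M₃^p if and only if both bicomplex numbers c₁ − c₂·i₂ and c₁ + c₂·i₂ belong to M₂^p (products taken in the ring 𝕄(2)). Equivalently, M₃^p is the 𝕄(3)-cartesian product M₂^p ×_{γ₃} M₂^p. -/

import Mathlib

/-- Bicomplex multiplication on ℂ × ℂ. -/
def bcMul (z w : ℂ × ℂ) : ℂ × ℂ := (z.1 * w.1 - z.2 * w.2, z.1 * w.2 + z.2 * w.1)

/-- n-th power of a bicomplex number. -/
def bcPow (z : ℂ × ℂ) : ℕ → ℂ × ℂ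
  | 0 => (1, 0)
  | n + 1 => bcMul (bcPow z n) z

/-- The bicomplex norm ‖(z₁,z₂)‖₂ = √(|z₁|² + |z₂|²). -/
noncomputable def bcNorm (z : ℂ × ℂ) : ℝ :=
  Real.sqrt (‖z.1‖ ^ 2 + ‖z.2‖ ^ 2)

/-- The bicomplex polynomial Q_{p,c}(ζ) = ζ^p + c. -/
def bcQ (p : ℕ) (c : ℂ × ℂ) (z : ℂ × ℂ) : ℂ × ℂ := bcPow z p + c

/-- The bicomplex Multibrot set M₂^p. -/
def M2 (p : ℕ) : Set (ℂ × ℂ) :=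
  {c | ∃ M : ℝ, ∀ m : ℕ, 1 ≤ m → bcNorm ((bcQ p c)^[m] (0, 0)) ≤ M}

/-- The unit i₂ = (0,1) of 𝕄(2). -/
def i2 : ℂ × ℂ := (0, 1)

/-- Tricomplex multiplication on 𝕄(2) × 𝕄(2). -/
def tcMul (z w : (ℂ × ℂ) × (ℂ × ℂ)) : (ℂ × ℂ) × (ℂ × ℂ) :=
  (bcMul z.1 w.1 - bcMul z.2 w.2, bcMul z.1 w.2 + bcMul z.2 w.1)

/-- n-th power of a tricomplex number. -/
def tcPow (z : (ℂ × ℂ) × (ℂ × ℂ)) : ℕ → (ℂ × ℂ) × (ℂ × ℂ)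
  | 0 => ((1, 0), (0, 0))
  | n + 1 => tcMul (tcPow z n) z

/-- The tricomplex norm ‖(ζ₁,ζ₂)‖₃ = √(‖ζ₁‖₂² + ‖ζ₂‖₂²). -/
noncomputable def tcNorm (z : (ℂ × ℂ) × (ℂ × ℂ)) : ℝ :=
  Real.sqrt (bcNorm z.1 ^ 2 + bcNorm z.2 ^ 2)

/-- The tricomplex polynomial Q_{p,c}(η) = η^p + c. -/
def tcQ (p : ℕ) (c : (ℂ × ℂ) × (ℂ × ℂ)) (z : (ℂ × ℂ) × (ℂ × ℂ)) :
    (ℂ × ℂ) × (ℂ × ℂ) := tcPow z p + c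

/-- The tricomplex Multibrot set M₃^p. -/
def M3 (p : ℕ) : Set ((ℂ × ℂ) × (ℂ × ℂ)) :=
  {c | ∃ M : ℝ, ∀ m : ℕ, 1 ≤ m → tcNorm ((tcQ p c)^[m] ((0, 0), (0, 0))) ≤ M}

/-- The idempotent projection z₁ - z₂·i₂. -/
def phiM (z : (ℂ × ℂ) × (ℂ × ℂ)) : ℂ × ℂ := z.1 - bcMul z.2 i2

/-- The idempotent projection z₁ + z₂·i₂. -/
def phiP (z : (ℂ × ℂ) × (ℂ × ℂ)) : ℂ × ℂ := z.1 + bcMul z.2 i2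

lemma phiM_mul (z w : (ℂ × ℂ) × (ℂ × ℂ)) :
    phiM (tcMul z w) = bcMul (phiM z) (phiM w) := by
  simp only [phiM, tcMul, bcMul, i2, Prod.ext_iff, Prod.sub_def, Prod.add_def,
    Prod.fst, Prod.snd]
  constructor <;> ring

lemma phiP_mul (z w : (ℂ × ℂ) × (ℂ × ℂ)) :
    phiP (tcMul z w) = bcMul (phiP z) (phiP w) := by
  simp only [phiP, tcMul, bcMul, i2, Prod.ext_iff, Prod.sub_def, Prod.add_def,
    Prod.fst, Prod.snd]
  constructor <;> ring

lemma phiM_add (z w : (ℂ × ℂ) × (ℂ × ℂ)) : phiM (z + w) = phiM z + phiM w := by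
  simp only [phiM, bcMul, i2, Prod.ext_iff, Prod.sub_def, Prod.add_def]
  constructor <;> ring

lemma phiP_add (z w : (ℂ × ℂ) × (ℂ × ℂ)) : phiP (z + w) = phiP z + phiP w := by
  simp only [phiP, bcMul, i2, Prod.ext_iff, Prod.sub_def, Prod.add_def]
  constructor <;> ring

lemma phiM_zero : phiM ((0, 0), (0, 0)) = (0, 0) := by
  simp [phiM, bcMul, i2, Prod.ext_iff, Prod.sub_def]

lemma phiP_zero : phiP ((0, 0), (0, 0)) = (0, 0) := by
  simp [phiP, bcMul, i2, Prod.ext_iff, Prod.add_def]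

lemma phiM_pow (z : (ℂ × ℂ) × (ℂ × ℂ)) (n : ℕ) :
    phiM (tcPow z n) = bcPow (phiM z) n := by
  induction n with
  | zero => simp [tcPow, bcPow, phiM, bcMul, i2, Prod.ext_iff, Prod.sub_def]
  | succ n ih => rw [tcPow, bcPow, phiM_mul, ih]

lemma phiP_pow (z : (ℂ × ℂ) × (ℂ × ℂ)) (n : ℕ) :
    phiP (tcPow z n) = bcPow (phiP z) n := by
  induction n with
  | zero => simp [tcPow, bcPow, phiP, bcMul, i2, Prod.ext_iff, Prod.add_def]
  | succ n ih => rw [tcPow, bcPow, phiP_mul, ih]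

lemma phiM_Q (p : ℕ) (c z : (ℂ × ℂ) × (ℂ × ℂ)) :
    phiM (tcQ p c z) = bcQ p (phiM c) (phiM z) := by
  rw [tcQ, bcQ, phiM_add, phiM_pow]

lemma phiP_Q (p : ℕ) (c z : (ℂ × ℂ) × (ℂ × ℂ)) :
    phiP (tcQ p c z) = bcQ p (phiP c) (phiP z) := by
  rw [tcQ, bcQ, phiP_add, phiP_pow]

lemma phiM_iter (p : ℕ) (c : (ℂ × ℂ) × (ℂ × ℂ)) (m : ℕ) :
    phiM ((tcQ p c)^[m] ((0, 0), (0, 0))) = (bcQ p (phiM c))^[m] (0, 0) := by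
  induction m with
  | zero => simpa using phiM_zero
  | succ m ih =>
      rw [Function.iterate_succ_apply', Function.iterate_succ_apply', phiM_Q, ih]

lemma phiP_iter (p : ℕ) (c : (ℂ × ℂ) × (ℂ × ℂ)) (m : ℕ) :
    phiP ((tcQ p c)^[m] ((0, 0), (0, 0))) = (bcQ p (phiP c))^[m] (0, 0) := by
  induction m with
  | zero => simpa using phiP_zero
  | succ m ih =>
      rw [Function.iterate_succ_apply', Function.iterate_succ_apply', phiP_Q, ih]

lemma bcNorm_nonneg (z : ℂ × ℂ) : 0 ≤ bcNorm z := Real.sqrt_nonneg _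

lemma tcNorm_nonneg (z : (ℂ × ℂ) × (ℂ × ℂ)) : 0 ≤ tcNorm z := Real.sqrt_nonneg _

lemma bcNorm_sq (z : ℂ × ℂ) :
    bcNorm z ^ 2 = ‖z.1‖ ^ 2 + ‖z.2‖ ^ 2 := by
  rw [bcNorm, Real.sq_sqrt]
  positivity

lemma tcNorm_sq (z : (ℂ × ℂ) × (ℂ × ℂ)) :
    tcNorm z ^ 2 = bcNorm z.1 ^ 2 + bcNorm z.2 ^ 2 := by
  rw [tcNorm, Real.sq_sqrt]
  positivity

lemma parallelogram (z : (ℂ × ℂ) × (ℂ × ℂ)) :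
    bcNorm (phiM z) ^ 2 + bcNorm (phiP z) ^ 2 = 2 * tcNorm z ^ 2 := by
  rw [tcNorm_sq, bcNorm_sq, bcNorm_sq, bcNorm_sq, bcNorm_sq]
  simp only [phiM, phiP, bcMul, i2, Prod.sub_def, Prod.add_def, Complex.sq_norm,
    Complex.normSq_apply, Complex.sub_re, Complex.sub_im, Complex.add_re,
    Complex.add_im, Complex.mul_re, Complex.mul_im, Complex.zero_re,
    Complex.zero_im, Complex.one_re, Complex.one_im]
  ring

theorem tricomplex_multibrot_cartesian (p : ℕ) (hp : 2 ≤ p) (c₁ c₂ : ℂ × ℂ) :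
    (c₁, c₂) ∈ M3 p ↔ c₁ - bcMul c₂ i2 ∈ M2 p ∧ c₁ + bcMul c₂ i2 ∈ M2 p := by
  have hM : c₁ - bcMul c₂ i2 = phiM (c₁, c₂) := rfl
  have hP : c₁ + bcMul c₂ i2 = phiP (c₁, c₂) := rfl
  constructor
  · rintro ⟨M, hMb⟩
    have hM0 : 0 ≤ M := le_trans (tcNorm_nonneg _) (hMb 1 le_rfl)
    constructor
    · refine ⟨Real.sqrt 2 * M, fun m hm => ?_⟩
      rw [hM, ← phiM_iter]
      set η := (tcQ p (c₁, c₂))^[m] ((0, 0), (0, 0)) with hη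
      have h1 : bcNorm (phiM η) ^ 2 ≤ 2 * M ^ 2 := by
        have := parallelogram η
        have h2 : tcNorm η ^ 2 ≤ M ^ 2 :=
          pow_le_pow_left₀ (tcNorm_nonneg _) (hMb m hm) 2
        nlinarith [sq_nonneg (bcNorm (phiP η))]
      have h3 : (Real.sqrt 2 * M) ^ 2 = 2 * M ^ 2 := by
        rw [mul_pow, Real.sq_sqrt (by norm_num : (0:ℝ) ≤ 2)]
      refine le_of_pow_le_pow_left₀ two_ne_zero (by positivity) ?_
      rw [h3]; exact h1
    · refine ⟨Real.sqrt 2 * M, fun m hm => ?_⟩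
      rw [hP, ← phiP_iter]
      set η := (tcQ p (c₁, c₂))^[m] ((0, 0), (0, 0)) with hη
      have h1 : bcNorm (phiP η) ^ 2 ≤ 2 * M ^ 2 := by
        have := parallelogram η
        have h2 : tcNorm η ^ 2 ≤ M ^ 2 :=
          pow_le_pow_left₀ (tcNorm_nonneg _) (hMb m hm) 2
        nlinarith [sq_nonneg (bcNorm (phiM η))]
      have h3 : (Real.sqrt 2 * M) ^ 2 = 2 * M ^ 2 := by
        rw [mul_pow, Real.sq_sqrt (by norm_num : (0:ℝ) ≤ 2)]
      refine le_of_pow_le_pow_left₀ two_ne_zero (by positivity) ?_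
      rw [h3]; exact h1
  · rintro ⟨⟨M₁, hM1⟩, ⟨M₂, hM2⟩⟩
    rw [hM] at hM1
    rw [hP] at hM2
    have hM10 : 0 ≤ M₁ := le_trans (bcNorm_nonneg _) (hM1 1 le_rfl)
    have hM20 : 0 ≤ M₂ := le_trans (bcNorm_nonneg _) (hM2 1 le_rfl)
    refine ⟨M₁ + M₂, fun m hm => ?_⟩
    set η := (tcQ p (c₁, c₂))^[m] ((0, 0), (0, 0)) with hη
    have h1 : bcNorm (phiM η) ≤ M₁ := by rw [hη, phiM_iter]; exact hM1 m hm
    have h2 : bcNorm (phiP η) ≤ M₂ := by rw [hη, phiP_iter]; exact hM2 m hm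
    have h3 := parallelogram η
    have h4 : tcNorm η ^ 2 ≤ (M₁ + M₂) ^ 2 := by
      nlinarith [bcNorm_nonneg (phiM η), bcNorm_nonneg (phiP η),
        tcNorm_nonneg η]
    exact le_of_pow_le_pow_left₀ two_ne_zero (by positivity) h4
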